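/- Fix μ > 0 and define f, λ : ℂ² \ {0} → ℝ by f(z) = |z|²/(|z|² + μ) and λ(z) = 1/(2|z|²), where |z|² = |z₁|² + |z₂|². Then for every z ≠ 0, λ(z)·Df(z) = (f(z)² − f(z))·Dλ(z) as real-linear maps from ℂ² to ℝ, where D denotes the real Fréchet derivative. (This is the equation λ·df = (f² − f)·dλ whose solution produces the BPST instanton connection A = (|z|²/(|z|² + μ))·γ⁻¹dγ.) -/

import Mathlib

/-- `|z|² = |z₁|² + |z₂|²` on `ℂ²`. -/
noncomputable def normSq2 (z : ℂ × ℂ) : ℝ :=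
  Complex.normSq z.1 + Complex.normSq z.2

/-- The BPST profile function `f(z) = |z|²/(|z|² + μ)`. -/
noncomputable def fBPST (μ : ℝ) (z : ℂ × ℂ) : ℝ :=
  normSq2 z / (normSq2 z + μ)

/-- `λ(z) = 1/(2|z|²)`. -/
noncomputable def lamBPST (z : ℂ × ℂ) : ℝ :=
  1 / (2 * normSq2 z)

lemma normSq2_eq : normSq2 = fun w : ℂ × ℂ => ‖w.1‖ ^ 2 + ‖w.2‖ ^ 2 := by
  funext w
  simp [normSq2, Complex.normSq_eq_norm_sq]

lemma diffAt_normSq2 (z : ℂ × ℂ) : DifferentiableAt ℝ normSq2 z := by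
  rw [normSq2_eq]
  exact (((contDiff_norm_sq ℝ (n := 1)).differentiable one_ne_zero).comp differentiable_fst z).add
    (((contDiff_norm_sq ℝ (n := 1)).differentiable one_ne_zero).comp differentiable_snd z)

/-- the BPST profile `f(z) = |z|²/(|z|² + μ)` solves the equation
`λ·df = (f² − f)·dλ` with `λ = 1/(2|z|²)`, where `D` is the real Fréchet
derivative on `ℂ² ≃ ℝ⁴`. -/
theorem fBPST_solves_ode (μ : ℝ) (hμ : 0 < μ) :
    ∀ z : ℂ × ℂ, z ≠ 0 →
      lamBPST z • fderiv ℝ (fBPST μ) z =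
        ((fBPST μ z) ^ 2 - fBPST μ z) • fderiv ℝ lamBPST z := by
  intro z hz
  set n := normSq2 z with hn_def
  have hn : 0 < n := by
    have h1 := Complex.normSq_nonneg z.1
    have h2 := Complex.normSq_nonneg z.2
    rcases lt_or_eq_of_le (by simpa [hn_def, normSq2] using add_nonneg h1 h2) with h | h
    · exact h
    · exfalso
      apply hz
      have h1' : Complex.normSq z.1 = 0 := by
        have := h.symm
        linarith [Complex.normSq_nonneg z.2]
      have h2' : Complex.normSq z.2 = 0 := by
        have := h.symm
        linarith [Complex.normSq_nonneg z.1]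
      exact Prod.ext (Complex.normSq_eq_zero.mp h1') (Complex.normSq_eq_zero.mp h2')
  have hden : n + μ ≠ 0 := by positivity
  have hN : HasFDerivAt normSq2 (fderiv ℝ normSq2 z) z := (diffAt_normSq2 z).hasFDerivAt
  set L := fderiv ℝ normSq2 z with hL
  -- derivative of t ↦ t/(t+μ) at n
  have hg : HasDerivAt (fun t : ℝ => t / (t + μ)) (μ / (n + μ) ^ 2) n := by
    have h : HasDerivAt (fun t : ℝ => t / (t + μ)) _ n := (hasDerivAt_id n).div ((hasDerivAt_id n).add_const μ) hden
    convert h using 1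
    field_simp
    simp
  -- derivative of t ↦ 1/(2t) at n
  have hh : HasDerivAt (fun t : ℝ => 1 / (2 * t)) (-(1 / (2 * n ^ 2))) n := by
    have h : HasDerivAt (fun t : ℝ => 1 / (2 * t)) _ n := (hasDerivAt_const n (1:ℝ)).div ((hasDerivAt_id n).const_mul 2)
      (by positivity)
    convert h using 1
    field_simp
    ring
  have hf : HasFDerivAt (fBPST μ) ((μ / (n + μ) ^ 2) • L) z := by
    have := hg.comp_hasFDerivAt z hN
    exact this
  have hlam : HasFDerivAt lamBPST ((-(1 / (2 * n ^ 2))) • L) z := by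
    have := hh.comp_hasFDerivAt z hN
    exact this
  rw [hf.fderiv, hlam.fderiv, smul_smul, smul_smul]
  congr 1
  simp only [lamBPST, fBPST, ← hn_def]
  field_simp
  ring
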